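/- arXiv:2101.10800 — 3 statements merged into one kernel-verified Lean document; each statement's English description precedes it below -/
import Mathlib

section
/- Define R(x) = max_{w ∈ W(x)} max_{π ∈ Π} πᵀ(b − Ax − Cw), where W(x) = {w : Gw ≤ g + Δx} is nonempty and bounded and Π = {π : Bᵀπ ≤ 0, −1 ≤ π ≤ 0}. Then x satisfies ∀ w ∈ W(x), Y(x,w) ≠ ∅ if and only if R(x) ≤ 0. -/
open Matrix

open Finset in

lemma cone_reduce {k : ℕ} {F : Type*} [AddCommGroup F] [Module ℝ F] (v : Fin k → F) :
    ∀ (n : ℕ) (c : Fin k → ℝ), (univ.filter (fun i => c i ≠ 0)).card ≤ n → (∀ i, 0 ≤ c i) →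
    ∃ c' : Fin k → ℝ, (∀ i, 0 ≤ c' i) ∧ (∑ i, c' i • v i = ∑ i, c i • v i) ∧
      LinearIndependent ℝ (fun i : {i // c' i ≠ 0} => v i) := by
  intro n
  induction n with
  | zero =>
    intro c hcard hc
    refine ⟨c, hc, rfl, ?_⟩
    have hall : ∀ i, c i = 0 := by
      intro i
      by_contra hi
      have : i ∈ univ.filter (fun i => c i ≠ 0) := by simp [hi]
      have := Finset.card_pos.mpr ⟨i, this⟩
      omega
    haveI : IsEmpty {i // c i ≠ 0} := ⟨fun i => i.2 (hall i.1)⟩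
    exact linearIndependent_empty_type
  | succ n ih =>
    intro c hcard hc
    by_cases hli : LinearIndependent ℝ (fun i : {i // c i ≠ 0} => v i)
    · exact ⟨c, hc, rfl, hli⟩
    · -- extract a dependence relation supported on supp c
      obtain ⟨g, hgsum, i1, hgi1⟩ := Fintype.not_linearIndependent_iff.mp hli
      set a : Fin k → ℝ := fun i => if h : c i ≠ 0 then g ⟨i, h⟩ else 0 with ha
      have hasupp : ∀ i, c i = 0 → a i = 0 := by
        intro i hi; simp [ha, hi]
      have hasum : ∑ i, a i • v i = 0 := by
        have h1 : ∑ i, a i • v i = ∑ i ∈ univ.filter (fun i => c i ≠ 0), a i • v i := by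
          refine (Finset.sum_filter_of_ne ?_).symm
          intro i _ hi
          intro h0
          exact hi (by simp [ha, h0])
        have h2 : ∑ i ∈ univ.filter (fun i => c i ≠ 0), a i • v i
            = ∑ i : {i // c i ≠ 0}, a i.1 • v i.1 := by
          refine Finset.sum_subtype _ (by simp) _
        rw [h1, h2]
        calc ∑ i : {i // c i ≠ 0}, a i.1 • v i.1 = ∑ i : {i // c i ≠ 0}, g i • v i.1 := by
              refine Finset.sum_congr rfl fun i _ => ?_
              simp [ha, i.2]
          _ = 0 := hgsum
      have hane : ∃ i, a i ≠ 0 := ⟨i1.1, by simpa [ha, i1.2] using hgi1⟩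
      -- key construction, for any relation a with a positive entry
      have key : ∀ a : Fin k → ℝ, (∀ i, c i = 0 → a i = 0) → (∑ i, a i • v i = 0) →
          (∃ i, 0 < a i) →
          ∃ c' : Fin k → ℝ, (∀ i, 0 ≤ c' i) ∧ (∀ i, c i = 0 → c' i = 0) ∧
            (∃ i0, c i0 ≠ 0 ∧ c' i0 = 0) ∧ ∑ i, c' i • v i = ∑ i, c i • v i := by
        intro a hsupp hsum ⟨ip, hip⟩
        have hT : ip ∈ univ.filter (fun i => 0 < a i) := by simp [hip]
        obtain ⟨i0, hi0T, hmin⟩ := Finset.exists_min_image _ (fun i => c i / a i) ⟨ip, hT⟩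
        have hai0 : 0 < a i0 := by simpa using hi0T
        set t : ℝ := c i0 / a i0 with hcdef
        have ht0 : 0 ≤ t := div_nonneg (hc i0) hai0.le
        refine ⟨fun i => c i - t * a i, ?_, ?_, ⟨i0, ?_, ?_⟩, ?_⟩
        · intro i
          show 0 ≤ c i - t * a i
          by_cases hai : 0 < a i
          · have := hmin i (by simp [hai])
            have : t * a i ≤ c i := by
              rw [div_le_div_iff₀ hai0 hai] at this
              calc t * a i = c i0 / a i0 * a i := rfl
                _ ≤ c i := by
                  rw [div_mul_eq_mul_div, div_le_iff₀ hai0]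
                  linarith [this]
            linarith
          · push_neg at hai
            have : t * a i ≤ 0 := mul_nonpos_of_nonneg_of_nonpos ht0 hai
            linarith [hc i]
        · intro i hi
          show c i - t * a i = 0
          simp [hi, hsupp i hi]
        · intro h0
          have := hsupp i0 h0
          exact absurd this (ne_of_gt hai0)
        · show c i0 - t * a i0 = 0
          rw [hcdef, div_mul_cancel₀ _ (ne_of_gt hai0), sub_self]
        · show ∑ i, (c i - t * a i) • v i = ∑ i, c i • v i
          have : ∑ i, (c i - t * a i) • v i = ∑ i, c i • v i - t • ∑ i, a i • v i := by
            rw [Finset.smul_sum, ← Finset.sum_sub_distrib]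
            refine Finset.sum_congr rfl fun i _ => ?_
            rw [sub_smul, smul_smul]
          rw [this, hsum, smul_zero, sub_zero]
      -- produce a relation with a positive entry
      have hposcase : ∃ a' : Fin k → ℝ, (∀ i, c i = 0 → a' i = 0) ∧ (∑ i, a' i • v i = 0) ∧
          ∃ i, 0 < a' i := by
        obtain ⟨i2, hi2⟩ := hane
        rcases lt_or_gt_of_ne hi2 with hneg | hpos
        · refine ⟨-a, fun i hi => by simp [hasupp i hi], by
            simpa [neg_smul] using congrArg Neg.neg hasum, ⟨i2, by simpa using hneg⟩⟩
        · exact ⟨a, hasupp, hasum, ⟨i2, hpos⟩⟩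
      obtain ⟨a', h1, h2, h3⟩ := hposcase
      obtain ⟨c', hc'0, hc'supp, ⟨i0, hi0c, hi0c'⟩, hc'sum⟩ := key a' h1 h2 h3
      have hsubset : univ.filter (fun i => c' i ≠ 0) ⊆ univ.filter (fun i => c i ≠ 0) := by
        intro i hi
        simp only [mem_filter, mem_univ, true_and] at hi ⊢
        intro h0; exact hi (hc'supp i h0)
      have hcard' : (univ.filter (fun i => c' i ≠ 0)).card ≤ n := by
        have hss : univ.filter (fun i => c' i ≠ 0) ⊂ univ.filter (fun i => c i ≠ 0) := by
          refine ⟨hsubset, fun hsub => ?_⟩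
          have : i0 ∈ univ.filter (fun i => c' i ≠ 0) := hsub (by simp [hi0c])
          simp [hi0c'] at this
        have := Finset.card_lt_card hss
        omega
      obtain ⟨c'', h1', h2', h3'⟩ := ih c' hcard' hc'0
      exact ⟨c'', h1', h2'.trans hc'sum, h3'⟩

open Finset in
lemma isClosed_coneGen {k m : ℕ} (v : Fin k → (Fin m → ℝ)) :
    IsClosed {x : Fin m → ℝ | ∃ c : Fin k → ℝ, (∀ i, 0 ≤ c i) ∧ x = ∑ i, c i • v i} := by
  classical
  -- the piece corresponding to a subset S with linearly independent vectors
  set piece : Finset (Fin k) → Set (Fin m → ℝ) := fun S =>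
    if LinearIndependent ℝ (fun i : {i // i ∈ S} => v i.1) then
      (fun c : {i // i ∈ S} → ℝ => ∑ i, c i • v i.1) '' {c | ∀ i, 0 ≤ c i}
    else ∅ with hpiece
  have hclosed : ∀ S, IsClosed (piece S) := by
    intro S
    rw [hpiece]
    by_cases hLI : LinearIndependent ℝ (fun i : {i // i ∈ S} => v i.1)
    · simp only [if_pos hLI]
      set L : ({i // i ∈ S} → ℝ) →ₗ[ℝ] (Fin m → ℝ) :=
        { toFun := fun c => ∑ i, c i • v i.1
          map_add' := by
            intro c d
            simp [add_smul, Finset.sum_add_distrib]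
          map_smul' := by
            intro r c
            simp [Finset.smul_sum, smul_smul] } with hL
      have hker : LinearMap.ker L = ⊥ := by
        rw [LinearMap.ker_eq_bot']
        intro c hc
        have := Fintype.linearIndependent_iff.mp hLI c hc
        funext i; exact this i
      have hemb := LinearMap.isClosedEmbedding_of_injective hker
      have hset : IsClosed {c : {i // i ∈ S} → ℝ | ∀ i, 0 ≤ c i} := by
        have : {c : {i // i ∈ S} → ℝ | ∀ i, 0 ≤ c i} = ⋂ i, {c | 0 ≤ c i} :=
          Set.ext fun c => by simp
        rw [this]
        exact isClosed_iInter fun i => isClosed_le continuous_const (continuous_apply i)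
      exact hemb.isClosedMap _ hset
    · simp only [if_neg hLI]
      exact isClosed_empty
  have hunion : {x : Fin m → ℝ | ∃ c : Fin k → ℝ, (∀ i, 0 ≤ c i) ∧ x = ∑ i, c i • v i}
      = ⋃ S : Finset (Fin k), piece S := by
    ext x
    simp only [Set.mem_setOf_eq, Set.mem_iUnion]
    constructor
    · rintro ⟨c, hc, rfl⟩
      obtain ⟨c', hc'0, hc'sum, hc'li⟩ := cone_reduce v (univ.filter (fun i => c i ≠ 0)).card
        c le_rfl hc
      set S := univ.filter (fun i => c' i ≠ 0) with hS
      refine ⟨S, ?_⟩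
      have hmem : ∀ i : {i // i ∈ S}, c' i.1 ≠ 0 := by
        intro i
        have h2 : i.1 ∈ univ.filter (fun j => c' j ≠ 0) := i.2
        exact (Finset.mem_filter.mp h2).2
      have hli : LinearIndependent ℝ (fun i : {i // i ∈ S} => v i.1) := by
        have := hc'li.comp (fun i : {i // i ∈ S} => (⟨i.1, hmem i⟩ : {i // c' i ≠ 0}))
          (fun i j h => Subtype.ext (by have := congrArg Subtype.val h; exact this))
        exact this
      rw [hpiece]
      simp only [if_pos hli]
      refine ⟨fun i => c' i.1, fun i => hc'0 i.1, ?_⟩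
      show ∑ i : {i // i ∈ S}, c' i.1 • v i.1 = ∑ i, c i • v i
      have h1 : ∑ i : {i // i ∈ S}, c' i.1 • v i.1 = ∑ i ∈ S, c' i • v i := by
        rw [Finset.univ_eq_attach]
        exact Finset.sum_attach S (fun i => c' i • v i)
      have h2 : ∑ i ∈ S, c' i • v i = ∑ i, c' i • v i := by
        refine Finset.sum_subset (Finset.subset_univ S) fun i _ hi => ?_
        have : c' i = 0 := by
          by_contra h0
          exact hi (by simp [hS, h0])
        simp [this]
      rw [h1, h2, hc'sum]
    · rintro ⟨S, hx⟩
      rw [hpiece] at hx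
      by_cases hLI : LinearIndependent ℝ (fun i : {i // i ∈ S} => v i.1)
      · simp only [if_pos hLI] at hx
        obtain ⟨c, hc, rfl⟩ := hx
        refine ⟨fun i => if h : i ∈ S then c ⟨i, h⟩ else 0, fun i => ?_,
          show ∑ i : {i // i ∈ S}, c i • v i.1 = ∑ i, (if h : i ∈ S then c ⟨i, h⟩ else 0) • v i
          from ?_⟩
        · by_cases h : i ∈ S
          · simpa [h] using hc ⟨i, h⟩
          · simp [h]
        · have h2 : ∑ i, (if h : i ∈ S then c ⟨i, h⟩ else 0) • v i
              = ∑ i ∈ S, (if h : i ∈ S then c ⟨i, h⟩ else 0) • v i := by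
            refine (Finset.sum_subset (Finset.subset_univ S) fun i _ hi => ?_).symm
            simp [hi]
          have h1 : ∑ i ∈ S, (if h : i ∈ S then c ⟨i, h⟩ else 0) • v i
              = ∑ i : {i // i ∈ S}, (if h : i.1 ∈ S then c ⟨i.1, h⟩ else 0) • v i.1 := by
            rw [Finset.univ_eq_attach]
            exact (Finset.sum_attach S (fun i => (if h : i ∈ S then c ⟨i, h⟩ else 0) • v i)).symm
          rw [h2, h1]
          refine (Finset.sum_congr rfl fun i _ => ?_).symm
          simp [i.2]
      · simp only [if_neg hLI] at hx
        exact absurd hx (Set.notMem_empty _)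
  rw [hunion]
  exact isClosed_iUnion_of_finite hclosed


open Finset in
lemma farkas {m ny : ℕ} (B : Matrix (Fin m) (Fin ny) ℝ) (d : Fin m → ℝ)
    (h : ¬ ∃ y : Fin ny → ℝ, 0 ≤ y ∧ B.mulVec y ≤ d) :
    ∃ π : Fin m → ℝ, Bᵀ.mulVec π ≤ 0 ∧ -1 ≤ π ∧ π ≤ 0 ∧ 0 < π ⬝ᵥ d := by
  classical
  set v : Fin (ny + m) → (Fin m → ℝ) :=
    Fin.addCases (fun j => fun i => B i j) (fun i0 => Pi.single i0 1) with hv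
  set Co : Set (Fin m → ℝ) := {x | ∃ c : Fin (ny + m) → ℝ, (∀ i, 0 ≤ c i) ∧ x = ∑ i, c i • v i}
    with hCo
  -- decompose the sums
  have hsplit : ∀ c : Fin (ny + m) → ℝ, ∑ i, c i • v i
      = B.mulVec (fun j => c (Fin.castAdd m j)) + (fun i => c (Fin.natAdd ny i)) := by
    intro c
    rw [Fin.sum_univ_add]
    funext i
    simp only [hv, Fin.addCases_left, Fin.addCases_right, Pi.add_apply, Finset.sum_apply,
      Pi.smul_apply, smul_eq_mul, Matrix.mulVec, dotProduct]
    congr 1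
    · exact Finset.sum_congr rfl fun j _ => mul_comm _ _
    · simp [Pi.single_apply, mul_ite, Finset.sum_ite_eq']
  -- membership characterization
  have hmem : ∀ x : Fin m → ℝ, x ∈ Co ↔ ∃ y : Fin ny → ℝ, 0 ≤ y ∧ B.mulVec y ≤ x := by
    intro x
    constructor
    · rintro ⟨c, hc, rfl⟩
      refine ⟨fun j => c (Fin.castAdd m j), fun j => hc _, fun i => ?_⟩
      rw [hsplit c]
      simp only [Pi.add_apply]
      have := hc (Fin.natAdd ny i)
      linarith
    · rintro ⟨y, hy, hle⟩
      refine ⟨Fin.addCases y (fun i => x i - B.mulVec y i), ?_, ?_⟩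
      · intro i
        induction i using Fin.addCases with
        | left j => simpa using hy j
        | right i => simpa using hle i
      · rw [hsplit]
        funext i
        simp
  have hd : d ∉ Co := by
    rw [hmem]; exact h
  have hconv : Convex ℝ Co := by
    intro p hp q hq θ η hθ hη hsum1
    obtain ⟨c, hc, rfl⟩ := hp
    obtain ⟨c', hc', rfl⟩ := hq
    refine ⟨fun i => θ * c i + η * c' i, fun i =>
      add_nonneg (mul_nonneg hθ (hc i)) (mul_nonneg hη (hc' i)), ?_⟩
    rw [Finset.smul_sum, Finset.smul_sum, ← Finset.sum_add_distrib]
    refine Finset.sum_congr rfl fun i _ => ?_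
    rw [add_smul, smul_smul, smul_smul]
  have hCoclosed : IsClosed Co := isClosed_coneGen v
  obtain ⟨f, u, hfC, hfd⟩ := geometric_hahn_banach_closed_point hconv hCoclosed hd
  have h0mem : (0 : Fin m → ℝ) ∈ Co := (hmem 0).mpr ⟨0, le_rfl, by simp [Matrix.mulVec_zero]⟩
  have hu : 0 < u := by
    have := hfC 0 h0mem
    simpa using this
  have hfC' : ∀ a ∈ Co, f a ≤ 0 := by
    intro a ha
    by_contra hfa
    push_neg at hfa
    obtain ⟨c, hc, rfl⟩ := ha
    set t : ℝ := (u + 1) / f (∑ i, c i • v i) with htdef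
    have ht : 0 < t := div_pos (by linarith) hfa
    have htmem : t • (∑ i, c i • v i) ∈ Co := by
      refine ⟨fun i => t * c i, fun i => mul_nonneg ht.le (hc i), ?_⟩
      rw [Finset.smul_sum]
      refine Finset.sum_congr rfl fun i _ => ?_
      show t • (c i • v i) = (t * c i) • v i
      rw [smul_smul]
    have := hfC _ htmem
    rw [f.map_smul, smul_eq_mul, htdef, div_mul_cancel₀ _ (ne_of_gt hfa)] at this
    linarith
  -- the dual vector
  set π0 : Fin m → ℝ := fun i => f (Pi.single i 1) with hπ0
  have hfrep : ∀ a : Fin m → ℝ, f a = ∑ i, a i * π0 i := by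
    intro a
    have ha : a = ∑ i, a i • (Pi.single i 1 : Fin m → ℝ) := by
      funext j
      simp [Pi.single_apply, mul_ite, Finset.sum_ite_eq']
    conv_lhs => rw [ha]
    rw [map_sum]
    exact Finset.sum_congr rfl fun i _ => by rw [f.map_smul, smul_eq_mul, hπ0]
  have hπ0le : ∀ i, π0 i ≤ 0 := by
    intro i
    have hsmem : Pi.single i (1 : ℝ) ∈ Co := (hmem _).mpr ⟨0, le_rfl, by
      rw [Matrix.mulVec_zero]
      exact fun j => Pi.single_nonneg.mpr zero_le_one j⟩
    have := hfC' _ hsmem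
    rwa [hπ0]
  have hBt : ∀ j, Bᵀ.mulVec π0 j ≤ 0 := by
    intro j
    have hcol : (fun i => B i j) ∈ Co := (hmem _).mpr ⟨Pi.single j 1, fun i =>
      Pi.single_nonneg.mpr zero_le_one i, by
        intro i
        rw [Matrix.mulVec_single]
        simp⟩
    have := hfC' _ hcol
    rw [hfrep] at this
    simpa [Matrix.mulVec, dotProduct, Matrix.transpose_apply] using this
  have hπ0d : 0 < π0 ⬝ᵥ d := by
    have : 0 < f d := lt_trans hu hfd
    rw [hfrep] at this
    simpa [dotProduct, mul_comm] using this
  -- scaling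
  set cn : ℝ := 1 + ∑ i, |π0 i| with hcn
  have hcnpos : 0 < cn := by
    have : (0:ℝ) ≤ ∑ i, |π0 i| := Finset.sum_nonneg fun i _ => abs_nonneg _
    linarith
  refine ⟨cn⁻¹ • π0, ?_, ?_, ?_, ?_⟩
  · intro j
    rw [Matrix.mulVec_smul]
    have := hBt j
    simpa using mul_nonpos_of_nonneg_of_nonpos (inv_nonneg.mpr hcnpos.le) this
  · intro i
    have habs : |π0 i| ≤ ∑ i, |π0 i| :=
      Finset.single_le_sum (fun i _ => abs_nonneg (π0 i)) (Finset.mem_univ i)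
    have h1 : -cn ≤ π0 i := by
      have := neg_abs_le (π0 i)
      simp only [hcn]
      linarith
    have : (-1 : ℝ) ≤ cn⁻¹ * π0 i := by
      rw [neg_le, ← mul_neg]
      have h2 : cn⁻¹ * -π0 i ≤ cn⁻¹ * cn :=
        mul_le_mul_of_nonneg_left (by linarith) (inv_nonneg.mpr hcnpos.le)
      rwa [inv_mul_cancel₀ (ne_of_gt hcnpos)] at h2
    simpa using this
  · intro i
    simpa using mul_nonpos_of_nonneg_of_nonpos (inv_nonneg.mpr hcnpos.le) (hπ0le i)
  · rw [smul_dotProduct]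
    simpa using mul_pos (inv_pos.mpr hcnpos) hπ0d


/-- With `R(x) = max_{w ∈ W(x)} max_{π ∈ Π} πᵀ(b − Ax − Cw)`, where
`W(x) = {w : Gw ≤ g + Δx}` is nonempty and bounded and
`Π = {π : Bᵀπ ≤ 0, −1 ≤ π ≤ 0}`, the first-stage decision `x` satisfies
`∀ w ∈ W(x), Y(x,w) ≠ ∅` if and only if `R(x) ≤ 0`. -/
theorem stmt_4 (m nx ny nw r : ℕ)
    (A : Matrix (Fin m) (Fin nx) ℝ) (B : Matrix (Fin m) (Fin ny) ℝ)
    (C : Matrix (Fin m) (Fin nw) ℝ) (b : Fin m → ℝ)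
    (G : Matrix (Fin r) (Fin nw) ℝ) (g : Fin r → ℝ) (Δ : Matrix (Fin r) (Fin nx) ℝ)
    (x : Fin nx → ℝ)
    (hne : ({w : Fin nw → ℝ | G.mulVec w ≤ g + Δ.mulVec x}).Nonempty)
    (hbdd : Bornology.IsBounded {w : Fin nw → ℝ | G.mulVec w ≤ g + Δ.mulVec x}) :
    (∀ w ∈ {w : Fin nw → ℝ | G.mulVec w ≤ g + Δ.mulVec x},
        ({y : Fin ny → ℝ | A.mulVec x + B.mulVec y + C.mulVec w ≤ b ∧ 0 ≤ y}).Nonempty) ↔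
    sSup {v : ℝ | ∃ w ∈ {w : Fin nw → ℝ | G.mulVec w ≤ g + Δ.mulVec x},
        ∃ π ∈ {π : Fin m → ℝ | Bᵀ.mulVec π ≤ 0 ∧ -1 ≤ π ∧ π ≤ 0},
          v = π ⬝ᵥ (b - A.mulVec x - C.mulVec w)} ≤ 0 := by
  classical
  set W : Set (Fin nw → ℝ) := {w | G.mulVec w ≤ g + Δ.mulVec x} with hW
  set dd : (Fin nw → ℝ) → (Fin m → ℝ) := fun w => b - A.mulVec x - C.mulVec w with hdd
  set S : Set ℝ := {v : ℝ | ∃ w ∈ W, ∃ π ∈ {π : Fin m → ℝ | Bᵀ.mulVec π ≤ 0 ∧ -1 ≤ π ∧ π ≤ 0},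
      v = π ⬝ᵥ dd w} with hS
  -- feasibility reformulation
  have hfeas : ∀ w : Fin nw → ℝ,
      ({y : Fin ny → ℝ | A.mulVec x + B.mulVec y + C.mulVec w ≤ b ∧ 0 ≤ y}).Nonempty ↔
      ∃ y : Fin ny → ℝ, 0 ≤ y ∧ B.mulVec y ≤ dd w := by
    intro w
    constructor
    · rintro ⟨y, hy1, hy2⟩
      refine ⟨y, hy2, fun i => ?_⟩
      have := hy1 i
      simp only [Pi.add_apply, Pi.sub_apply, hdd] at this ⊢
      linarith
    · rintro ⟨y, hy2, hy1⟩
      refine ⟨y, fun i => ?_, hy2⟩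
      have := hy1 i
      simp only [Pi.add_apply, Pi.sub_apply, hdd] at this ⊢
      linarith
  -- upper bound for S
  obtain ⟨M, hM⟩ := isBounded_iff_forall_norm_le.mp hbdd
  have hSbdd : BddAbove S := by
    refine ⟨∑ i, (|b i - A.mulVec x i| + ∑ j, |C i j| * max M 0), ?_⟩
    rintro v ⟨w, hw, π, ⟨hBt, hπl, hπu⟩, rfl⟩
    have hπabs : ∀ i, |π i| ≤ 1 := fun i => abs_le.mpr ⟨hπl i, le_trans (hπu i) zero_le_one⟩
    have hwM : ∀ j, |w j| ≤ max M 0 := by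
      intro j
      calc |w j| = ‖w j‖ := (Real.norm_eq_abs _).symm
        _ ≤ ‖w‖ := norm_le_pi_norm w j
        _ ≤ M := hM w hw
        _ ≤ max M 0 := le_max_left _ _
    calc π ⬝ᵥ dd w = ∑ i, π i * dd w i := rfl
      _ ≤ ∑ i, |π i * dd w i| := Finset.sum_le_sum fun i _ => le_abs_self _
      _ ≤ ∑ i, (|b i - A.mulVec x i| + ∑ j, |C i j| * max M 0) := by
          refine Finset.sum_le_sum fun i _ => ?_
          rw [abs_mul]
          calc |π i| * |dd w i| ≤ 1 * |dd w i| :=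
                mul_le_mul_of_nonneg_right (hπabs i) (abs_nonneg _)
            _ = |dd w i| := one_mul _
            _ ≤ |b i - A.mulVec x i| + |C.mulVec w i| := by
                have : dd w i = (b i - A.mulVec x i) - C.mulVec w i := by simp [hdd]
                rw [this]
                exact abs_sub _ _
            _ ≤ |b i - A.mulVec x i| + ∑ j, |C i j| * max M 0 := by
                gcongr
                calc |C.mulVec w i| = |∑ j, C i j * w j| := rfl
                  _ ≤ ∑ j, |C i j * w j| := Finset.abs_sum_le_sum_abs _ _
                  _ ≤ ∑ j, |C i j| * max M 0 := by
                      refine Finset.sum_le_sum fun j _ => ?_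
                      rw [abs_mul]
                      exact mul_le_mul_of_nonneg_left (hwM j) (abs_nonneg _)
  constructor
  · -- feasibility → sSup ≤ 0
    intro hfeasAll
    refine Real.sSup_le ?_ le_rfl
    rintro v ⟨w, hw, π, ⟨hBt, hπl, hπu⟩, rfl⟩
    obtain ⟨y, hy0, hyle⟩ := (hfeas w).mp (hfeasAll w hw)
    calc π ⬝ᵥ dd w = ∑ i, π i * dd w i := rfl
      _ ≤ ∑ i, π i * B.mulVec y i := by
          refine Finset.sum_le_sum fun i _ => ?_
          exact mul_le_mul_of_nonpos_left (hyle i) (hπu i)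
      _ = π ⬝ᵥ B.mulVec y := rfl
      _ = (Bᵀ.mulVec π) ⬝ᵥ y := by
          rw [Matrix.dotProduct_mulVec, Matrix.mulVec_transpose]
      _ ≤ 0 := by
          refine Finset.sum_nonpos fun i _ => ?_
          exact mul_nonpos_of_nonpos_of_nonneg (hBt i) (hy0 i)
  · -- sSup ≤ 0 → feasibility
    intro hsup w hw
    by_contra hinfeas
    have : ¬ ∃ y : Fin ny → ℝ, 0 ≤ y ∧ B.mulVec y ≤ dd w := fun h => hinfeas ((hfeas w).mpr h)
    obtain ⟨π, hBt, hπl, hπu, hpos⟩ := farkas B (dd w) this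
    have hv0 : π ⬝ᵥ dd w ∈ S := ⟨w, hw, π, ⟨hBt, hπl, hπu⟩, rfl⟩
    have := le_csSup hSbdd hv0
    linarith
end

section
/- The constraint x ∈ X_R, where X_R = {x : ∀ w ∈ W(x), Y(x,w) ≠ ∅}, is equivalent to the semi-infinite constraint 0 ≥ πᵀ(b − Ax − Cw) for all π ∈ Π and all w ∈ W(x). -/
open Matrix

open Finset in

lemma farkas_cone (m : ℕ) : ∀ (n : ℕ) (a : Fin n → (Fin m → ℝ)) (d : Fin m → ℝ),
    (∃ c : Fin n → ℝ, (∀ i, 0 ≤ c i) ∧ ∑ i, c i • a i = d) ∨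
    (∃ u : Fin m → ℝ, (∀ i, 0 ≤ u ⬝ᵥ a i) ∧ u ⬝ᵥ d < 0) := by
  intro n
  induction n with
  | zero =>
    intro a d
    by_cases hd : d = 0
    · exact Or.inl ⟨0, fun i => le_rfl, by simp [hd]⟩
    · refine Or.inr ⟨-d, fun i => i.elim0, ?_⟩
      have h : (0:ℝ) < d ⬝ᵥ d := by
        have h0 : 0 ≤ d ⬝ᵥ d := Finset.sum_nonneg fun i _ => mul_self_nonneg _
        rcases h0.lt_or_eq with h | h
        · exact h
        · exact absurd ((dotProduct_self_eq_zero).mp h.symm) hd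
      simpa [neg_dotProduct] using neg_neg_iff_pos.mpr h
  | succ n ih =>
    intro a d
    set a' : Fin n → (Fin m → ℝ) := fun i => a i.castSucc with ha'
    set aL : Fin m → ℝ := a (Fin.last n) with haL
    rcases ih a' d with ⟨c, hc, hsum⟩ | ⟨u, hu, hud⟩
    · refine Or.inl ⟨Fin.snoc c 0, ?_, ?_⟩
      · intro i
        refine Fin.lastCases (by simp) (fun j => by simpa using hc j) i
      · rw [Fin.sum_univ_castSucc]
        simpa using hsum
    · by_cases h : 0 ≤ u ⬝ᵥ aL
      · exact Or.inr ⟨u, fun i => Fin.lastCases h (fun j => hu j) i, hud⟩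
      · push_neg at h
        set t : ℝ := u ⬝ᵥ aL with ht
        have htne : t ≠ 0 := ne_of_lt h
        rcases ih (fun i => a' i - ((u ⬝ᵥ a' i)/t) • aL) (d - ((u ⬝ᵥ d)/t) • aL) with
          ⟨c, hc, hsum⟩ | ⟨v, hv, hvd⟩
        · set T : ℝ := ∑ i, c i * (u ⬝ᵥ a' i) with hT
          set μ : ℝ := (u ⬝ᵥ d - T) / t with hμ
          have hT0 : 0 ≤ T := Finset.sum_nonneg fun i _ => mul_nonneg (hc i) (hu i)
          have hμ0 : 0 ≤ μ := by
            rw [hμ, div_nonneg_iff]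
            right
            constructor
            · linarith
            · exact h.le
          refine Or.inl ⟨Fin.snoc c μ, ?_, ?_⟩
          · intro i
            refine Fin.lastCases (by simpa using hμ0) (fun j => by simpa using hc j) i
          · rw [Fin.sum_univ_castSucc]
            simp only [Fin.snoc_castSucc, Fin.snoc_last]
            have hsum2 : ∑ i, c i • a' i
                = (d - ((u ⬝ᵥ d)/t) • aL) + (∑ i, (c i * (u ⬝ᵥ a' i) / t)) • aL := by
              calc ∑ i, c i • a' i
                  = ∑ i, (c i • (a' i - ((u ⬝ᵥ a' i)/t) • aL)
                      + (c i * (u ⬝ᵥ a' i) / t) • aL) := by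
                    apply Finset.sum_congr rfl
                    intro i _
                    match_scalars <;> field_simp <;> ring
                _ = _ := by rw [Finset.sum_add_distrib, ← Finset.sum_smul, hsum]
            have hS : (∑ i, (c i * (u ⬝ᵥ a' i) / t)) = T / t := by
              rw [hT, Finset.sum_div]
            show (∑ i, c i • a' i) + μ • aL = d
            rw [hsum2, hS, hμ]
            match_scalars
            · ring
            · field_simp
              ring
        · refine Or.inr ⟨v - ((v ⬝ᵥ aL)/t) • u, ?_, ?_⟩
          · intro i
            refine Fin.lastCases ?_ ?_ i
            · show 0 ≤ (v - ((v ⬝ᵥ aL)/t) • u) ⬝ᵥ aL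
              rw [sub_dotProduct, smul_dotProduct, ← ht, smul_eq_mul,
                div_mul_cancel₀ _ htne, sub_self]
            · intro j
              have h1 := hv j
              rw [dotProduct_sub, dotProduct_smul, smul_eq_mul] at h1
              show 0 ≤ (v - ((v ⬝ᵥ aL)/t) • u) ⬝ᵥ a' j
              rw [sub_dotProduct, smul_dotProduct, smul_eq_mul]
              have key : (v ⬝ᵥ aL)/t * (u ⬝ᵥ a' j) = (u ⬝ᵥ a' j)/t * (v ⬝ᵥ aL) := by
                ring
              linarith
          · rw [sub_dotProduct, smul_dotProduct, smul_eq_mul]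
            rw [dotProduct_sub, dotProduct_smul, smul_eq_mul] at hvd
            have key : (v ⬝ᵥ aL)/t * (u ⬝ᵥ d) = (u ⬝ᵥ d)/t * (v ⬝ᵥ aL) := by ring
            linarith

open Finset in

lemma farkas_slack (m ny : ℕ) (B : Matrix (Fin m) (Fin ny) ℝ) (d : Fin m → ℝ)
    (c : Fin (ny + m) → ℝ)
    (hsum : ∑ k, c k • (Fin.addCases (fun j => fun i => B i j)
        (fun i' => Pi.single i' (1:ℝ)) k) = d) :
    B.mulVec (fun j => c (Fin.castAdd m j)) + (fun i => c (Fin.natAdd ny i)) = d := by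
  rw [← hsum, Fin.sum_univ_add]
  funext i
  simp only [Fin.addCases_left, Fin.addCases_right, Pi.add_apply, Finset.sum_apply,
    Pi.smul_apply, smul_eq_mul]
  congr 1
  · rw [mulVec, dotProduct]
    exact Finset.sum_congr rfl fun j _ => mul_comm _ _
  · rw [Finset.sum_eq_single i]
    · simp
    · intro b _ hb
      simp [Pi.single_apply, hb]
    · simp

/-- The constraint `x ∈ X_R`, with `X_R = {x : ∀ w ∈ W(x), Y(x,w) ≠ ∅}`, is
equivalent to the semi-infinite constraint `0 ≥ πᵀ(b − Ax − Cw)` for all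
`π ∈ Π` and all `w ∈ W(x)`. -/
theorem stmt_6 (m nx ny nw r : ℕ)
    (A : Matrix (Fin m) (Fin nx) ℝ) (B : Matrix (Fin m) (Fin ny) ℝ)
    (C : Matrix (Fin m) (Fin nw) ℝ) (b : Fin m → ℝ)
    (G : Matrix (Fin r) (Fin nw) ℝ) (g : Fin r → ℝ) (Δ : Matrix (Fin r) (Fin nx) ℝ)
    (x : Fin nx → ℝ)
    (hne : ({w : Fin nw → ℝ | G.mulVec w ≤ g + Δ.mulVec x}).Nonempty)
    (hbdd : Bornology.IsBounded {w : Fin nw → ℝ | G.mulVec w ≤ g + Δ.mulVec x}) :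
    (∀ w ∈ {w : Fin nw → ℝ | G.mulVec w ≤ g + Δ.mulVec x},
        ({y : Fin ny → ℝ | A.mulVec x + B.mulVec y + C.mulVec w ≤ b ∧ 0 ≤ y}).Nonempty) ↔
    (∀ π ∈ {π : Fin m → ℝ | Bᵀ.mulVec π ≤ 0 ∧ -1 ≤ π ∧ π ≤ 0},
      ∀ w ∈ {w : Fin nw → ℝ | G.mulVec w ≤ g + Δ.mulVec x},
        π ⬝ᵥ (b - A.mulVec x - C.mulVec w) ≤ 0) := by
  have farkas_cone := farkas_cone m
  constructor
  · intro h π hπ w hw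
    obtain ⟨hBπ, hπlo, hπhi⟩ := hπ
    obtain ⟨y, hy1, hy2⟩ := h w hw
    set d : Fin m → ℝ := b - A.mulVec x - C.mulVec w with hd
    have hBy : ∀ i, B.mulVec y i ≤ d i := by
      intro i
      have := hy1 i
      simp only [Pi.add_apply] at this
      simp only [hd, Pi.sub_apply]
      linarith
    calc π ⬝ᵥ d ≤ π ⬝ᵥ B.mulVec y := by
          apply Finset.sum_le_sum
          intro i _
          exact mul_le_mul_of_nonpos_left (hBy i) (hπhi i)
      _ = Bᵀ.mulVec π ⬝ᵥ y := by
          rw [dotProduct_mulVec, mulVec_transpose]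
      _ ≤ 0 := by
          apply Finset.sum_nonpos
          intro j _
          exact mul_nonpos_of_nonpos_of_nonneg (hBπ j) (hy2 j)
  · intro h w hw
    set d : Fin m → ℝ := b - A.mulVec x - C.mulVec w with hd
    set a : Fin (ny + m) → (Fin m → ℝ) :=
      fun k => Fin.addCases (fun j => fun i => B i j) (fun i' => Pi.single i' (1:ℝ)) k with ha
    rcases farkas_cone (ny + m) a d with ⟨c, hc, hsum⟩ | ⟨u, hu, hud⟩
    · refine ⟨fun j => c (Fin.castAdd m j), ?_, fun j => hc _⟩
      have key := farkas_slack m ny B d c hsum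
      intro i
      have hkey := congrFun key i
      simp only [Pi.add_apply] at hkey
      have hs : 0 ≤ c (Fin.natAdd ny i) := hc _
      simp only [Pi.add_apply, hd, Pi.sub_apply] at *
      linarith
    · exfalso
      have hu0 : ∀ i, 0 ≤ u i := by
        intro i
        have := hu (Fin.natAdd ny i)
        simp only [ha, Fin.addCases_right] at this
        simpa [dotProduct, Pi.single_apply] using this
      set M : ℝ := 1 + ∑ i, u i with hM
      have hM0 : (0:ℝ) < M := by
        have : 0 ≤ ∑ i, u i := Finset.sum_nonneg fun i _ => hu0 i
        linarith
      have huM : ∀ i, u i ≤ M := by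
        intro i
        have h1 : u i ≤ ∑ j, u j :=
          Finset.single_le_sum (fun j _ => hu0 j) (Finset.mem_univ i)
        linarith
      set π : Fin m → ℝ := fun i => -(u i) / M with hπ
      have hmem : Bᵀ.mulVec π ≤ 0 ∧ -1 ≤ π ∧ π ≤ 0 := by
        refine ⟨?_, ?_, ?_⟩
        · intro j
          have hBu : 0 ≤ Bᵀ.mulVec u j := by
            have := hu (Fin.castAdd m j)
            simp only [ha, Fin.addCases_left] at this
            rw [mulVec, dotProduct]
            simpa [transpose_apply, dotProduct, mul_comm] using this
          have : Bᵀ.mulVec π j = -(Bᵀ.mulVec u j / M) := by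
            simp only [mulVec, dotProduct, hπ]
            rw [← neg_div, ← Finset.sum_neg_distrib, Finset.sum_div]
            exact Finset.sum_congr rfl fun i _ => by ring
          rw [this]
          simp only [Pi.zero_apply]
          have h2 : 0 ≤ (Bᵀ *ᵥ u) j / M := div_nonneg hBu hM0.le
          linarith
        · intro i
          simp only [hπ, Pi.neg_apply, Pi.one_apply]
          rw [neg_div, neg_le_neg_iff, div_le_one hM0]
          exact huM i
        · intro i
          simp only [hπ, Pi.zero_apply, neg_div]
          simp only [Left.neg_nonpos_iff]
          exact div_nonneg (hu0 i) hM0.le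
      have hle := h π hmem w hw
      have : π ⬝ᵥ d = -(u ⬝ᵥ d / M) := by
        simp only [dotProduct, hπ]
        rw [← neg_div, ← Finset.sum_neg_distrib, Finset.sum_div]
        exact Finset.sum_congr rfl fun i _ => by ring
      rw [show (b - A.mulVec x - C.mulVec w) = d from rfl, this] at hle
      have : 0 < -(u ⬝ᵥ d / M) := by
        have := div_neg_of_neg_of_pos hud hM0
        linarith
      linarith
end

section
/- Lemma 1(e): In the modified Benders algorithm, the dual solutions π_1*, π_2*, … generated at distinct iterations are pairwise distinct: if j₁ < j₂ and π_{j₁}* were equal to π_{j₂}*, then since x^{j₂} satisfies the cut 0 ≥ π_{j₁}*ᵀ(b − Ax^{j₂} − Cw) for all w ∈ W(x^{j₂}), this contradicts R(x^{j₂}) = max_{w ∈ W(x^{j₂})} π_{j₂}*ᵀ(b − Ax^{j₂} − Cw) > 0. -/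
open Matrix

/-- Lemma 1(e): the dual solutions `π_1*, π_2*, …` generated at distinct
iterations of the modified Benders algorithm are pairwise distinct.  At
iteration `j` the pair `(w_j, π_j*)` satisfies `w_j ∈ W(x^j)` and
`π_j*ᵀ(b − Ax^j − Cw_j) = R(x^j) > 0`, while `x^{j₂}` satisfies the cuts
`0 ≥ π_{j₁}*ᵀ(b − Ax^{j₂} − Cw)` for all `w ∈ W(x^{j₂})` and all `j₁ < j₂`;
hence `π_{j₁}* ≠ π_{j₂}*` whenever `j₁ < j₂`. -/
theorem stmt_14 (m nx nw r : ℕ)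
    (A : Matrix (Fin m) (Fin nx) ℝ) (C : Matrix (Fin m) (Fin nw) ℝ) (b : Fin m → ℝ)
    (G : Matrix (Fin r) (Fin nw) ℝ) (g : Fin r → ℝ) (Δ : Matrix (Fin r) (Fin nx) ℝ)
    (x : ℕ → Fin nx → ℝ) (w : ℕ → Fin nw → ℝ) (πs : ℕ → Fin m → ℝ)
    (hw : ∀ j, G.mulVec (w j) ≤ g + Δ.mulVec (x j))
    (hpos : ∀ j, 0 < πs j ⬝ᵥ (b - A.mulVec (x j) - C.mulVec (w j)))
    (hcut : ∀ j₂ j₁, j₁ < j₂ → ∀ w', G.mulVec w' ≤ g + Δ.mulVec (x j₂) →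
      πs j₁ ⬝ᵥ (b - A.mulVec (x j₂) - C.mulVec w') ≤ 0) :
    ∀ j₁ j₂, j₁ < j₂ → πs j₁ ≠ πs j₂ := by
  intro j₁ j₂ hlt heq
  have h := hcut j₂ j₁ hlt (w j₂) (hw j₂)
  rw [heq] at h
  exact absurd h (not_le.mpr (hpos j₂))
end
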